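/- Let r, m, s be positive integers with m > r. Then in LCTR, SG(((r+2)ᵐ, rˢ)) = 0 if r + m is even, and SG(((r+2)ᵐ, rˢ)) = 1 if r + m is odd, where ((r+2)ᵐ, rˢ) is the partition with m parts equal to r+2 followed by s parts equal to r. -/

import Mathlib

/-- Remove the left column of a Young diagram: subtract 1 from each part and
omit nonpositive values. -/
def leftCol (l : List ℕ) : List ℕ := (l.map (· - 1)).filter (0 < ·)

/-- Remove the top row of a Young diagram. -/
def topRow (l : List ℕ) : List ℕ := l.tail

/-- Minimum excluded value of a set of naturals. -/
noncomputable def mex (s : Set ℕ) : ℕ := sInf {n | n ∉ s}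

def wt (l : List ℕ) : ℕ := l.sum + l.length

lemma wt_leftCol_le (l : List ℕ) : wt (leftCol l) ≤ l.sum := by
  induction l with
  | nil => simp [leftCol, wt]
  | cons a t ih =>
    simp only [leftCol, wt] at ih ⊢
    rw [List.map_cons, List.filter_cons]
    by_cases h : 0 < a - 1
    · simp only [h, decide_true, if_true, List.sum_cons, List.length_cons]
      omega
    · simp only [h, decide_false, Bool.false_eq_true, if_false, List.sum_cons]
      omega

lemma wt_leftCol_lt (l : List ℕ) (h : l ≠ []) : wt (leftCol l) < wt l := by
  have h1 := wt_leftCol_le l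
  have h2 : 0 < l.length := List.length_pos_iff.mpr h
  unfold wt at *
  omega

lemma wt_topRow_lt (l : List ℕ) (h : l ≠ []) : wt (topRow l) < wt l := by
  cases l with
  | nil => exact absurd rfl h
  | cons a t => simp [topRow, wt]; omega

/-- The Sprague–Grundy value of a position in the LCTR game. -/
noncomputable def SG (l : List ℕ) : ℕ :=
  if h : l = [] then 0
  else mex {SG (leftCol l), SG (topRow l)}
termination_by wt l
decreasing_by
  · exact wt_leftCol_lt l h
  · exact wt_topRow_lt l h

/-- A partition: a non-increasing list of positive integers. -/
def IsPartition (l : List ℕ) : Prop := l.Pairwise (· ≥ ·) ∧ ∀ x ∈ l, 0 < x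

/-- The conjugate partition: the `j`-th part (for `1 ≤ j ≤ l₁`) is the number
of parts of `l` that are at least `j`. -/
def conj (l : List ℕ) : List ℕ :=
  (List.range (l.headD 0)).map (fun j => l.countP (fun x => decide (j < x)))

lemma mex_eq (s : Set ℕ) (n : ℕ) (h1 : n ∉ s) (h2 : ∀ k < n, k ∈ s) : mex s = n := by
  unfold mex
  refine le_antisymm (Nat.sInf_le h1) ?_
  by_contra h
  push_neg at h
  have hmem := Nat.sInf_mem (⟨n, h1⟩ : Set.Nonempty {m | m ∉ s})
  exact hmem (h2 _ h)

lemma mex_pair_ne (a b c : ℕ) (h : c ∈ ({a, b} : Set ℕ)) : mex {a, b} ≠ c := by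
  intro hc
  have hne : Set.Nonempty {n | n ∉ ({a, b} : Set ℕ)} := ⟨a + b + 1, by simp; omega⟩
  have hmem := Nat.sInf_mem hne
  rw [mex] at hc
  rw [hc] at hmem
  exact hmem h

lemma mex_pair (a b : ℕ) : mex ({a, b} : Set ℕ) =
    if a ≠ 0 ∧ b ≠ 0 then 0 else if a ≠ 1 ∧ b ≠ 1 then 1 else 2 := by
  split_ifs with h1 h2
  · exact mex_eq _ 0 (by simp [h1.1, h1.2, Ne.symm]) (by omega)
  · exact mex_eq _ 1 (by simp; omega) (by intro k hk; interval_cases k; simp; omega)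
  · exact mex_eq _ 2 (by simp; omega) (by intro k hk; interval_cases k <;> simp <;> omega)

lemma leftCol_append (l1 l2 : List ℕ) : leftCol (l1 ++ l2) = leftCol l1 ++ leftCol l2 := by
  simp [leftCol]

lemma leftCol_replicate (m a : ℕ) :
    leftCol (List.replicate m a) = if 0 < a - 1 then List.replicate m (a - 1) else [] := by
  simp [leftCol, List.filter_replicate]

lemma topRow_rep (m a : ℕ) (l : List ℕ) :
    topRow (List.replicate (m + 1) a ++ l) = List.replicate m a ++ l := by
  simp [topRow, List.replicate_succ]

lemma SG_ne_nil (l : List ℕ) (h : l ≠ []) :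
    SG l = mex {SG (leftCol l), SG (topRow l)} := by
  rw [SG]
  simp [h]


lemma SG_nil : SG [] = 0 := by rw [SG]; simp

lemma sg_one_rep : ∀ s, 0 < s → SG (List.replicate s 1) = 2 - s % 2 := by
  intro s
  induction s with
  | zero => omega
  | succ n ih =>
    intro _
    rw [SG_ne_nil _ (by simp)]
    have hL : leftCol (List.replicate (n + 1) 1) = [] := by
      rw [leftCol_replicate]; simp
    have hT : topRow (List.replicate (n + 1) 1) = List.replicate n 1 := by
      simpa using topRow_rep n 1 []
    rw [hL, hT, SG_nil, mex_pair]
    rcases Nat.eq_zero_or_pos n with h0 | h0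
    · subst h0
      simp only [List.replicate_zero, SG_nil]
      norm_num
    · rw [ih h0]; split_ifs <;> omega

lemma sg_two_rep : ∀ m, SG (List.replicate m 2) = m % 2 * 2 := by
  intro m
  induction m with
  | zero => simp [SG_nil]
  | succ n ih =>
    rw [SG_ne_nil _ (by simp)]
    have hL : leftCol (List.replicate (n + 1) 2) = List.replicate (n + 1) 1 := by
      rw [leftCol_replicate]; simp
    have hT : topRow (List.replicate (n + 1) 2) = List.replicate n 2 := by
      simpa using topRow_rep n 2 []
    rw [hL, hT, ih, sg_one_rep _ (by omega), mex_pair]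
    split_ifs <;> omega

/-- The `b = 1` row: `SG ((3^m), 1^s) = (1 + m) % 2` for `m, s ≥ 1`. -/
lemma sg_row_one (s : ℕ) (hs : 0 < s) : ∀ m, 0 < m →
    SG (List.replicate m 3 ++ List.replicate s 1) = (1 + m) % 2 := by
  intro m
  induction m with
  | zero => omega
  | succ n ih =>
    intro _
    rw [SG_ne_nil _ (by simp)]
    have hL : leftCol (List.replicate (n + 1) 3 ++ List.replicate s 1) =
        List.replicate (n + 1) 2 := by
      rw [leftCol_append, leftCol_replicate, leftCol_replicate]; simp
    have hT : topRow (List.replicate (n + 1) 3 ++ List.replicate s 1) =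
        List.replicate n 3 ++ List.replicate s 1 := topRow_rep n 3 _
    rw [hL, hT, sg_two_rep, mex_pair]
    rcases Nat.eq_zero_or_pos n with h0 | h0
    · subst h0
      simp only [List.replicate_zero, List.nil_append]
      simp only [sg_one_rep s hs]
      split_ifs <;> omega
    · rw [ih h0]; split_ifs <;> omega

/-- The key lemma: for `b ≥ 1`, `s ≥ 1`, `m ≥ max (b-1) 1`,
`SG ((b+2)^m, b^s) = (b + m) % 2`. -/
lemma sg_key : ∀ n b m s, b + m ≤ n → 0 < b → 0 < s → 0 < m → b - 1 ≤ m →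
    SG (List.replicate m (b + 2) ++ List.replicate s b) = (b + m) % 2 := by
  intro n
  induction n with
  | zero => omega
  | succ N ih =>
    intro b m s hn hb hs hm hbm
    rcases Nat.lt_or_ge b 2 with hb1 | hb2
    · -- b = 1
      have : b = 1 := by omega
      subst this
      exact sg_row_one s hs m hm
    · -- b ≥ 2
      obtain ⟨m', rfl⟩ : ∃ m', m = m' + 1 := ⟨m - 1, by omega⟩
      rw [SG_ne_nil _ (by simp)]
      have hL : leftCol (List.replicate (m' + 1) (b + 2) ++ List.replicate s b) =
          List.replicate (m' + 1) (b + 1) ++ List.replicate s (b - 1) := by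
        rw [leftCol_append, leftCol_replicate, leftCol_replicate]
        have h1 : 0 < b + 2 - 1 := by omega
        have h2 : 0 < b - 1 := by omega
        rw [if_pos h1, if_pos h2]
        rfl
      have hT : topRow (List.replicate (m' + 1) (b + 2) ++ List.replicate s b) =
          List.replicate m' (b + 2) ++ List.replicate s b := topRow_rep m' _ _
      have hLval : SG (List.replicate (m' + 1) (b + 1) ++ List.replicate s (b - 1)) =
          (b - 1 + (m' + 1)) % 2 := by
        have := ih (b - 1) (m' + 1) s (by omega) (by omega) hs (by omega) (by omega)
        have hb1 : b - 1 + 2 = b + 1 := by omega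
        rwa [hb1] at this
      rw [hL, hT, hLval]
      rcases Nat.lt_or_ge m' (b - 1) with hm' | hm'
      · -- m' = b - 2 : the boundary case
        have hmeq : m' = b - 2 := by omega
        have hTne : SG (List.replicate m' (b + 2) ++ List.replicate s b) ≠ 1 := by
          rcases Nat.lt_or_ge b 3 with hb3 | hb3
          · -- b = 2, m' = 0 : value is SG (2^s) ∈ {0, 2}
            have : b = 2 := by omega
            subst this
            have : m' = 0 := by omega
            subst this
            simp only [List.replicate_zero, List.nil_append]
            rw [sg_two_rep]
            omega
          · -- b ≥ 3 : unfold once; the L-option has value 1, so mex ≠ 1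
            rw [SG_ne_nil _ (by simp; omega)]
            have hL2 : leftCol (List.replicate m' (b + 2) ++ List.replicate s b) =
                List.replicate m' (b + 1) ++ List.replicate s (b - 1) := by
              rw [leftCol_append, leftCol_replicate, leftCol_replicate]
              rw [if_pos (by omega : 0 < b + 2 - 1), if_pos (by omega : 0 < b - 1)]
              rfl
            have hL2val : SG (List.replicate m' (b + 1) ++ List.replicate s (b - 1)) = 1 := by
              have := ih (b - 1) m' s (by omega) (by omega) hs (by omega) (by omega)
              have hb1 : b - 1 + 2 = b + 1 := by omega
              rw [hb1] at this
              rw [this]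
              omega
            rw [hL2, hL2val]
            exact mex_pair_ne _ _ _ (by simp)
        rw [mex_pair]
        have he : (b - 1 + (m' + 1)) % 2 = 0 := by omega
        have ht : (b + (m' + 1)) % 2 = 1 := by omega
        rw [he, ht]
        split_ifs with h1 h2
        · exact absurd h1.1 (by simp)
        · rfl
        · exfalso
          apply hTne
          by_contra hx
          exact h2 ⟨by omega, hx⟩
      · -- m' ≥ b - 1 : T-option also in the pattern
        have hTval : SG (List.replicate m' (b + 2) ++ List.replicate s b) =
            (b + m') % 2 := ih b m' s (by omega) hb hs (by omega) hm'
        rw [hTval, mex_pair]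
        split_ifs <;> omega


/-- For positive integers `r, m, s` with `m > r`, the partition
`((r+2)ᵐ, rˢ)` has Sprague–Grundy value 0 if `r + m` is even and 1 if `r + m`
is odd. -/
theorem SG_thick_gamma_two (r m s : ℕ) (hr : 0 < r) (hs : 0 < s) (hm : r < m) :
    (Even (r + m) → SG (List.replicate m (r + 2) ++ List.replicate s r) = 0) ∧
    (Odd (r + m) → SG (List.replicate m (r + 2) ++ List.replicate s r) = 1) := by
  have h := sg_key (r + m) r m s le_rfl hr hs (by omega) (by omega)
  exact ⟨fun he => by rw [h, Nat.even_iff.mp he],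
         fun ho => by rw [h, Nat.odd_iff.mp ho]⟩
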